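/- Let R be a commutative ring and let I be an ideal of R[x_1,…,x_n]. Assume: (i) x_k^{s+1} ∈ I for every δ+1 ≤ k ≤ n; (ii) X^m ∈ I for every m ∈ ∂O with deg m = s+1; (iii) for every 1 ≤ k ≤ δ−1 there exists N_k ∈ R[x_1,…,x_n] supported in trailmon with x_k^r − N_k ∈ I; (iv) for every m ∈ S_D there exists P_m ∈ R[x_1,…,x_n] supported in tar, with every element of the support of P_m having degree at least deg m, such that X^m + P_m ∈ I; and (v) there exist N supported in trailmon and P supported in tar' such that x_δ^r − N + P ∈ I. Then for every 1 ≤ k ≤ n there exists an integer e_k ≥ 1 such that x_k^{e_k} ∈ I. -/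

import Mathlib

open MvPolynomial
open scoped Classical

noncomputable section

/-- Total degree of an exponent vector `m : Fin n →₀ ℕ`. -/
def mdeg {n : ℕ} (m : Fin n →₀ ℕ) : ℕ := ∑ k, m k

/-- `m` is a δ-monomial: all exponents of variables strictly before `δ` vanish. -/
def IsDeltaMon {n : ℕ} (δ : Fin n) (m : Fin n →₀ ℕ) : Prop := ∀ k < δ, m k = 0

/-- `m` is a (δ+1)-monomial: all exponents of variables up to and including `δ` vanish. -/
def IsSuccDeltaMon {n : ℕ} (δ : Fin n) (m : Fin n →₀ ℕ) : Prop := ∀ k ≤ δ, m k = 0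

/-- The order ideal `O(n,r,s,δ,w)`. -/
def OIdeal {n : ℕ} (r s w : ℕ) (δ : Fin n) : Set (Fin n →₀ ℕ) :=
  {m | mdeg m < r ∨ (IsDeltaMon δ m ∧ r ≤ mdeg m ∧ mdeg m ≤ s ∧ m δ + w + 1 ≤ r)}

/-- The border `∂O`. -/
def Border {n : ℕ} (r s w : ℕ) (δ : Fin n) : Set (Fin n →₀ ℕ) :=
  {m | m ∉ OIdeal r s w δ ∧
    ∃ (α : Fin n) (t : Fin n →₀ ℕ), t ∈ OIdeal r s w δ ∧ m = Finsupp.single α 1 + t}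

/-- The set `S_D` of "diagonal" border monomials. -/
def SD {n : ℕ} (r s w : ℕ) (δ : Fin n) : Set (Fin n →₀ ℕ) :=
  {m | m ∈ Border r s w δ ∧ IsDeltaMon δ m ∧ r + 1 ≤ mdeg m ∧ mdeg m ≤ s}

/-- The set `S_L` of "leading" monomials. -/
def SL {n : ℕ} (r w : ℕ) (δ : Fin n) : Set (Fin n →₀ ℕ) :=
  {m | IsDeltaMon δ m ∧ mdeg m = r ∧ r - w ≤ m δ}

/-- `tar = {m ∈ O : r ≤ deg m ≤ s}`. -/
def Tar {n : ℕ} (r s w : ℕ) (δ : Fin n) : Set (Fin n →₀ ℕ) :=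
  {m | m ∈ OIdeal r s w δ ∧ r ≤ mdeg m ∧ mdeg m ≤ s}

/-- `tar' = {m ∈ tar : deg m ≤ s−1}`. -/
def Tar' {n : ℕ} (r s w : ℕ) (δ : Fin n) : Set (Fin n →₀ ℕ) :=
  {m | m ∈ Tar r s w δ ∧ mdeg m ≤ s - 1}

/-- `tar'' = {m ∈ tar' : m_{δ+1} ≥ w}` (`δ'` is the index of `x_{δ+1}`). -/
def Tar'' {n : ℕ} (r s w : ℕ) (δ δ' : Fin n) : Set (Fin n →₀ ℕ) :=
  {m | m ∈ Tar' r s w δ ∧ w ≤ m δ'}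

/-- `trailmon = {m ∈ O : deg m = s}`. -/
def Trail {n : ℕ} (r s w : ℕ) (δ : Fin n) : Set (Fin n →₀ ℕ) :=
  {m | m ∈ OIdeal r s w δ ∧ mdeg m = s}

/-- `leadmon = {m : deg m = r, m ∉ O}`. -/
def Lead {n : ℕ} (r s w : ℕ) (δ : Fin n) : Set (Fin n →₀ ℕ) :=
  {m | mdeg m = r ∧ m ∉ OIdeal r s w δ}

/-- `Seg_a`: δ-monomials of degree `r` with `x_δ`-exponent `r − a`. -/
def SegA {n : ℕ} (r a : ℕ) (δ : Fin n) : Set (Fin n →₀ ℕ) :=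
  {b | IsDeltaMon δ b ∧ mdeg b = r ∧ b δ = r - a}

/-- The monomial `x_δ^{r−a}·x_{δ+1}^{a}` (`δ'` is the index of `x_{δ+1}`). -/
def bstar {n : ℕ} (r a : ℕ) (δ δ' : Fin n) : Fin n →₀ ℕ :=
  Finsupp.single δ (r - a) + Finsupp.single δ' a

/-- Truncation: sum of homogeneous components of degree `0` through `s`. -/
def truncLE {n : ℕ} {R : Type*} [CommRing R] (s : ℕ) (P : MvPolynomial (Fin n) R) :
    MvPolynomial (Fin n) R :=
  ∑ m ∈ P.support.filter (fun m => mdeg m ≤ s), monomial m (coeff m P)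

/-- `optX R none = 1 = X₀`, `optX R (some a) = X a`. -/
def optX {n : ℕ} (R : Type*) [CommRing R] : Option (Fin n) → MvPolynomial (Fin n) R
  | none => 1
  | some a => X a

/-- `optE none = 0 = e₀`, `optE (some a) = e_a`. -/
def optE {n : ℕ} : Option (Fin n) → (Fin n →₀ ℕ)
  | none => 0
  | some a => Finsupp.single a 1

/-- The reduction operator determined by a target function `UpsD` on `S_D`. -/
def redFn {n : ℕ} {R : Type*} [CommRing R] (r s w : ℕ) (δ : Fin n)
    (UpsD : (Fin n →₀ ℕ) → MvPolynomial (Fin n) R) (P : MvPolynomial (Fin n) R) :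
    MvPolynomial (Fin n) R :=
  (∑ m ∈ P.support.filter (fun m => m ∈ Tar r s w δ), monomial m (coeff m P)) -
  ∑ m ∈ P.support.filter (fun m => m ∈ SD r s w δ), coeff m P • UpsD m

/-- The polynomial ring over `K` in the distinguished indeterminates `C_{(t,b)}`
and the modification indeterminates `θ_m`. -/
abbrev BigA (K : Type*) [Field K] {n : ℕ} (r s w : ℕ) (δ δ' : Fin n) : Type _ :=
  MvPolynomial ((↥(Trail r s w δ) × ↥(Lead r s w δ)) ⊕ ↥(Tar'' r s w δ δ')) K

/-- The generic linear combination `N_b = Σ_t C_{(t,b)}·X^t` for `b ∈ leadmon`, `0` otherwise. -/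
def NB (K : Type*) [Field K] {n : ℕ} (r s w : ℕ) (δ δ' : Fin n) (b : Fin n →₀ ℕ) :
    MvPolynomial (Fin n) (BigA K r s w δ δ') :=
  if hb : b ∈ Lead r s w δ then
    ∑ᶠ t : ↥(Trail r s w δ),
      monomial (t : Fin n →₀ ℕ)
        (MvPolynomial.X (Sum.inl (t, ⟨b, hb⟩)) : BigA K r s w δ δ')
  else 0

lemma mdeg_add {n : ℕ} (a b : Fin n →₀ ℕ) : mdeg (a + b) = mdeg a + mdeg b := by
  simp [mdeg, Finset.sum_add_distrib]

lemma mdeg_single {n : ℕ} (α : Fin n) (c : ℕ) : mdeg (Finsupp.single α c) = c := by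
  simp [mdeg, Finsupp.single_apply]

lemma X_mul_monomial' {n : ℕ} {R : Type*} [CommRing R] (α : Fin n) (m : Fin n →₀ ℕ) (c : R) :
    X α * monomial m c = monomial (Finsupp.single α 1 + m) c := by
  rw [← one_mul c, ← monomial_mul, X_pow_eq_monomial.symm, pow_one, one_mul c]

/-- an ideal containing the listed elements contains a power of every
variable (so its zero locus is supported at the origin). -/
theorem statement15 (R : Type*) [CommRing R] (n r s w : ℕ) (δ : Fin n)
    (hn : 2 ≤ n) (hr : 2 ≤ r) (hrs : r < s) (hδ : (δ : ℕ) + 1 < n) (hw : w + 1 ≤ r)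
    (I : Ideal (MvPolynomial (Fin n) R))
    (h1 : ∀ k : Fin n, δ < k → (X k : MvPolynomial (Fin n) R) ^ (s + 1) ∈ I)
    (h2 : ∀ m ∈ Border r s w δ, mdeg m = s + 1 →
      (monomial m (1 : R) : MvPolynomial (Fin n) R) ∈ I)
    (h3 : ∀ k : Fin n, k < δ → ∃ N : MvPolynomial (Fin n) R,
      (N.support : Set (Fin n →₀ ℕ)) ⊆ Trail r s w δ ∧ (X k) ^ r - N ∈ I)
    (h4 : ∀ m ∈ SD r s w δ, ∃ P : MvPolynomial (Fin n) R,
      (P.support : Set (Fin n →₀ ℕ)) ⊆ Tar r s w δ ∧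
      (∀ m' ∈ P.support, mdeg m ≤ mdeg m') ∧
      monomial m (1 : R) + P ∈ I)
    (h5 : ∃ N P : MvPolynomial (Fin n) R,
      (N.support : Set (Fin n →₀ ℕ)) ⊆ Trail r s w δ ∧
      (P.support : Set (Fin n →₀ ℕ)) ⊆ Tar' r s w δ ∧
      (X δ) ^ r - N + P ∈ I) :
    ∀ k : Fin n, ∃ e : ℕ, 1 ≤ e ∧ (X k : MvPolynomial (Fin n) R) ^ e ∈ I := by
  classical
  -- multiplying a Trail-supported polynomial by any variable lands in I
  have mulTrail : ∀ (α : Fin n) (N : MvPolynomial (Fin n) R),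
      (N.support : Set (Fin n →₀ ℕ)) ⊆ Trail r s w δ → X α * N ∈ I := by
    intro α N hN
    have hN' : X α * N = ∑ m ∈ N.support, X α * monomial m (coeff m N) := by
      conv_lhs => rw [N.as_sum]
      rw [Finset.mul_sum]
    rw [hN']
    apply Ideal.sum_mem
    intro m hm
    obtain ⟨hmO, hms⟩ := hN hm
    rw [X_mul_monomial']
    have hCm : (monomial (Finsupp.single α 1 + m) (coeff m N) : MvPolynomial (Fin n) R)
        = C (coeff m N) * monomial (Finsupp.single α 1 + m) 1 := by
      rw [C_mul_monomial, mul_one]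
    rw [hCm]
    apply Ideal.mul_mem_left
    apply h2
    · constructor
      · intro hcon
        rcases hcon with h | h
        · have := mdeg_add (Finsupp.single α 1) m
          rw [mdeg_single] at this
          omega
        · have := mdeg_add (Finsupp.single α 1) m
          rw [mdeg_single] at this
          omega
      · exact ⟨α, m, hmO, rfl⟩
    · rw [mdeg_add, mdeg_single]; omega
  -- key descending induction
  have keyA : ∀ j : ℕ, ∀ Q : MvPolynomial (Fin n) R,
      (Q.support : Set (Fin n →₀ ℕ)) ⊆ Tar r s w δ →
      (∀ m ∈ Q.support, s + 1 ≤ mdeg m + j) → X δ ^ j * Q ∈ I := by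
    intro j
    induction j with
    | zero =>
      intro Q hQ hdeg
      have hQ0 : Q = 0 := by
        rw [← support_eq_empty]
        by_contra hne
        obtain ⟨m, hm⟩ := Finset.nonempty_iff_ne_empty.2 hne
        have h1' := (hQ hm).2.2
        have h2' := hdeg m hm
        omega
      simp [hQ0]
    | succ j ih =>
      intro Q hQ hdeg
      have step : ∀ m ∈ Q.support, ∃ Q' : MvPolynomial (Fin n) R,
          (Q'.support : Set (Fin n →₀ ℕ)) ⊆ Tar r s w δ ∧
          (∀ m' ∈ Q'.support, mdeg m + 1 ≤ mdeg m') ∧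
          X δ * monomial m (1 : R) - Q' ∈ I := by
        intro m hm
        obtain ⟨hmO, hmr, hms⟩ := hQ hm
        have hmdm : IsDeltaMon δ m ∧ m δ + w + 1 ≤ r := by
          rcases hmO with h | h
          · omega
          · exact ⟨h.1, h.2.2.2⟩
        have hnewdeg : mdeg (Finsupp.single δ 1 + m) = mdeg m + 1 := by
          rw [mdeg_add, mdeg_single]; omega
        have hnewdm : IsDeltaMon δ (Finsupp.single δ 1 + m) := by
          intro k hk
          have : (Finsupp.single δ 1 : Fin n →₀ ℕ) k = 0 :=
            Finsupp.single_eq_of_ne (by exact fun h => absurd h (ne_of_lt hk))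
          simp [this, hmdm.1 k hk]
        by_cases hcase : mdeg m = s
        · refine ⟨0, by simp, by simp, ?_⟩
          rw [X_mul_monomial', sub_zero]
          apply h2
          · constructor
            · intro hcon
              rcases hcon with h | h <;> omega
            · exact ⟨δ, m, hmO, rfl⟩
          · omega
        · by_cases hO : (Finsupp.single δ 1 + m) ∈ OIdeal r s w δ
          · refine ⟨monomial (Finsupp.single δ 1 + m) (1 : R), ?_, ?_, ?_⟩
            · intro m' hm'
              have : m' = Finsupp.single δ 1 + m := by
                have := support_monomial_subset hm'
                simpa using this
              subst this
              exact ⟨hO, by omega, by omega⟩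
            · intro m' hm'
              have : m' = Finsupp.single δ 1 + m := by
                have := support_monomial_subset hm'
                simpa using this
              subst this; omega
            · rw [X_mul_monomial', sub_self]; exact I.zero_mem
          · have hSD : (Finsupp.single δ 1 + m) ∈ SD r s w δ := by
              refine ⟨⟨hO, δ, m, hmO, rfl⟩, hnewdm, by omega, by omega⟩
            obtain ⟨P, hPsup, hPdeg, hPI⟩ := h4 _ hSD
            refine ⟨-P, by simpa using hPsup, ?_, ?_⟩
            · intro m' hm'
              have := hPdeg m' (by simpa using hm')
              omega
            · rw [X_mul_monomial', sub_neg_eq_add]; exact hPI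
      choose Q' hQ'tar hQ'deg hQ'I using step
      set Qtot : MvPolynomial (Fin n) R :=
        ∑ m ∈ Q.support.attach, coeff (m : Fin n →₀ ℕ) Q • Q' m m.2 with hQtot
      have hdiff : X δ * Q - Qtot ∈ I := by
        have hXQ : X δ * Q =
            ∑ m ∈ Q.support.attach,
              coeff (m : Fin n →₀ ℕ) Q • (X δ * monomial (m : Fin n →₀ ℕ) (1 : R)) := by
          conv_lhs => rw [Q.as_sum]
          rw [Finset.mul_sum, ← Finset.sum_attach Q.support
            (fun m => X δ * monomial m (coeff m Q))]
          apply Finset.sum_congr rfl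
          intro m _
          rw [← mul_smul_comm, smul_monomial, smul_eq_mul, mul_one]
        rw [hXQ, hQtot, ← Finset.sum_sub_distrib]
        apply Ideal.sum_mem
        intro m _
        rw [← smul_sub, smul_eq_C_mul]
        exact Ideal.mul_mem_left _ _ (hQ'I m m.2)
      have happ := ih Qtot ?_ ?_
      · have heq : X δ ^ (j + 1) * Q = X δ ^ j * (X δ * Q - Qtot) + X δ ^ j * Qtot := by
          ring
        rw [heq]
        exact I.add_mem (Ideal.mul_mem_left _ _ hdiff) happ
      · intro m' hm'
        rw [hQtot] at hm'
        obtain ⟨m, -, hmem⟩ := Finset.mem_biUnion.1 (support_sum hm')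
        exact hQ'tar m m.2 (support_smul hmem)
      · intro m' hm'
        rw [hQtot] at hm'
        obtain ⟨m, -, hmem⟩ := Finset.mem_biUnion.1 (support_sum hm')
        have h1' := hQ'deg m m.2 m' (support_smul hmem)
        have h2' := hdeg m m.2
        omega
  intro k
  rcases lt_trichotomy k δ with hk | hk | hk
  · -- k < δ
    obtain ⟨N, hNs, hNI⟩ := h3 k hk
    refine ⟨r + 1, by omega, ?_⟩
    have heq : (X k : MvPolynomial (Fin n) R) ^ (r + 1) =
        X k * (X k ^ r - N) + X k * N := by ring
    rw [heq]
    exact I.add_mem (Ideal.mul_mem_left _ _ hNI) (mulTrail k N hNs)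
  · -- k = δ
    subst hk
    obtain ⟨N, P, hNs, hPs, hI5⟩ := h5
    refine ⟨s + 1, by omega, ?_⟩
    have hj : r + (s + 1 - r) = s + 1 := by omega
    have hXN : X k ^ (s + 1 - r) * N ∈ I := by
      have hsr : s + 1 - r = (s - r) + 1 := by omega
      rw [hsr, pow_succ, mul_assoc]
      exact Ideal.mul_mem_left _ _ (mulTrail k N hNs)
    have hXP : X k ^ (s + 1 - r) * P ∈ I := by
      apply keyA
      · intro m hm; exact (hPs hm).1
      · intro m hm
        have := (hPs hm).1.2.1
        omega
    have hpow : (X k : MvPolynomial (Fin n) R) ^ (s + 1) =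
        X k ^ (s + 1 - r) * X k ^ r := by
      rw [← pow_add]; congr 1; omega
    have heq : (X k : MvPolynomial (Fin n) R) ^ (s + 1) =
        X k ^ (s + 1 - r) * (X k ^ r - N + P) + X k ^ (s + 1 - r) * N
          - X k ^ (s + 1 - r) * P := by
      rw [hpow]; ring
    rw [heq]
    exact I.sub_mem (I.add_mem (Ideal.mul_mem_left _ _ hI5) hXN) hXP
  · exact ⟨s + 1, by omega, h1 k hk⟩
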